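/- Gain function for Lipschitz-Hessian conjugates: if h is L_h-smooth and ∇²h* is M-Lipschitz in operator norm, then for all x, y, v ∈ ℝ^d and λ ∈ [-1,1], D_{h*}(x + λv, x) ≤ λ² (1 + 2 M L_h (‖y - x‖ + ‖v‖)) D_{h*}(y + v, y). -/

import Mathlib

open Set
noncomputable section

abbrev E (d : ℕ) := EuclideanSpace ℝ (Fin d)

/-- Bregman divergence `D_f(x,y) = f x - f y - ⟪∇f(y), x - y⟫`. -/
def breg {d : ℕ} (f : E d → ℝ) (f' : E d → E d) (x y : E d) : ℝ :=
  f x - f y - inner ℝ (f' y) (x - y)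

/-- **Gain function for Lipschitz-Hessian conjugates.** If `h` is
`L_h`-smooth (so that `h*` is `(1/L_h)`-strongly convex, i.e.
`‖v‖² ≤ 2 L_h D_{h*}(y+v, y)`) and `∇²h*` is `M`-Lipschitz in operator norm,
then for all `x, y, v ∈ ℝ^d` and `λ ∈ [-1,1]`,
`D_{h*}(x + λv, x) ≤ λ² (1 + 2 M L_h (‖y - x‖ + ‖v‖)) D_{h*}(y + v, y)`. -/
theorem gain_function_lipschitz_hessian {d : ℕ}
    (hstar : E d → ℝ) (hstar' : E d → E d) (hstar'' : E d → E d →L[ℝ] E d)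
    (Lh M : ℝ) (hLh : 0 < Lh) (hM : 0 ≤ M)
    (hgrad : ∀ a : E d, HasGradientAt hstar (hstar' a) a)
    (hhess : ∀ a : E d, HasFDerivAt hstar' (hstar'' a) a)
    (hlip : ∀ a b u : E d, ‖hstar'' a u - hstar'' b u‖ ≤ M * ‖a - b‖ * ‖u‖)
    (hsc : ∀ y v : E d, ‖v‖ ^ 2 ≤ 2 * Lh * breg hstar hstar' (y + v) y)
    (x y v : E d) (l : ℝ) (hl : l ∈ Set.Icc (-1 : ℝ) 1) :
    breg hstar hstar' (x + l • v) x
      ≤ l ^ 2 * (1 + 2 * M * Lh * (‖y - x‖ + ‖v‖)) * breg hstar hstar' (y + v) y := by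
  obtain ⟨hl1, hl2⟩ := hl
  have key : ∀ (c u : E d) (t : ℝ),
      HasDerivAt (fun t : ℝ => hstar (c + t • u)) (inner ℝ (hstar' (c + t • u)) u : ℝ) t ∧
      HasDerivAt (fun t : ℝ => (inner ℝ (hstar' (c + t • u)) u : ℝ))
        (inner ℝ (hstar'' (c + t • u) u) u : ℝ) t := by
    intro c u t
    have hline : HasDerivAt (fun t : ℝ => c + t • u) u t := by
      simpa using ((hasDerivAt_id t).smul_const u).const_add c
    constructor
    · have h1 := ((hgrad (c + t • u)).hasFDerivAt).comp_hasDerivAt t hline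
      exact h1.congr_deriv (by simp [InnerProductSpace.toDual_apply_apply])
    · have h2 : HasDerivAt (fun t : ℝ => hstar' (c + t • u)) (hstar'' (c + t • u) u) t :=
        (hhess (c + t • u)).comp_hasDerivAt t hline
      simpa using h2.inner ℝ (hasDerivAt_const t u)
  set D : ℝ := breg hstar hstar' (y + v) y with hD
  have hv2 : ‖v‖ ^ 2 ≤ 2 * Lh * D := hsc y v
  have hDnn : 0 ≤ D := by nlinarith [sq_nonneg ‖v‖]
  set w : E d := l • v with hw
  set C : ℝ := l ^ 2 * (M * (‖y - x‖ + 2 * ‖v‖) * ‖v‖ ^ 2) with hC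
  set g : ℝ → ℝ := fun t => hstar (x + t • w) - hstar x - t * inner ℝ (hstar' x) w with hg
  set G : ℝ → ℝ := fun t => hstar (y + t • v) - hstar y - t * inner ℝ (hstar' y) v with hG
  set φ : ℝ → ℝ := fun t => l ^ 2 * G t + C * t ^ 2 / 2 - g t with hφ
  set φ1 : ℝ → ℝ := fun t =>
    l ^ 2 * ((inner ℝ (hstar' (y + t • v)) v : ℝ) - inner ℝ (hstar' y) v) + C * t
      - ((inner ℝ (hstar' (x + t • w)) w : ℝ) - inner ℝ (hstar' x) w) with hφ1
  set φ2 : ℝ → ℝ := fun t =>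
    l ^ 2 * (inner ℝ (hstar'' (y + t • v) v) v : ℝ) + C
      - (inner ℝ (hstar'' (x + t • w) w) w : ℝ) with hφ2
  have hφd : ∀ t : ℝ, HasDerivAt φ (φ1 t) t := by
    intro t
    have hGd : HasDerivAt G ((inner ℝ (hstar' (y + t • v)) v : ℝ)
        - inner ℝ (hstar' y) v) t := by
      exact
        (((key y v t).1.sub_const (hstar y)).sub ((hasDerivAt_id t).mul_const _)).congr_deriv (by simp)
    have hgd : HasDerivAt g ((inner ℝ (hstar' (x + t • w)) w : ℝ)
        - inner ℝ (hstar' x) w) t := by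
      exact
        (((key x w t).1.sub_const (hstar x)).sub ((hasDerivAt_id t).mul_const _)).congr_deriv (by simp)
    have hq : HasDerivAt (fun t : ℝ => C * t ^ 2 / 2) (C * t) t := by
      have := ((hasDerivAt_pow 2 t).const_mul C).div_const 2
      simpa [mul_comm, mul_assoc, mul_div_assoc] using this
    exact ((hGd.const_mul (l ^ 2)).add hq).sub hgd
  have hφ1d : ∀ t : ℝ, HasDerivAt φ1 (φ2 t) t := by
    intro t
    have hq : HasDerivAt (fun t : ℝ => C * t) C t := by
      simpa using (hasDerivAt_id t).const_mul C
    exact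
      ((((key y v t).2.sub_const _).const_mul (l ^ 2)).add hq).sub
        ((key x w t).2.sub_const _)
  have hφ2nn : ∀ t ∈ Set.Icc (0 : ℝ) 1, 0 ≤ φ2 t := by
    intro t ht
    obtain ⟨ht0, ht1⟩ := ht
    have hwv : (inner ℝ (hstar'' (x + t • w) w) w : ℝ)
        = l ^ 2 * (inner ℝ (hstar'' (x + t • w) v) v : ℝ) := by
      rw [hw, map_smul, real_inner_smul_left, real_inner_smul_right]; ring
    set a : E d := x + t • w with ha
    set b : E d := y + t • v with hb
    have hab : a - b = (x - y) + (t * (l - 1)) • v := by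
      rw [ha, hb, hw]; module
    have habn : ‖a - b‖ ≤ ‖y - x‖ + 2 * ‖v‖ := by
      rw [hab]
      calc ‖(x - y) + (t * (l - 1)) • v‖ ≤ ‖x - y‖ + ‖(t * (l - 1)) • v‖ := norm_add_le _ _
        _ = ‖x - y‖ + |t * (l - 1)| * ‖v‖ := by rw [norm_smul, Real.norm_eq_abs]
        _ ≤ ‖y - x‖ + 2 * ‖v‖ := by
            rw [norm_sub_rev x y]
            gcongr
            rw [abs_mul]
            have h1 : |t| ≤ 1 := abs_le.mpr ⟨by linarith, ht1⟩
            have h2 : |l - 1| ≤ 2 := abs_le.mpr ⟨by linarith, by linarith⟩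
            calc |t| * |l - 1| ≤ 1 * 2 := by
                  exact mul_le_mul h1 h2 (abs_nonneg _) zero_le_one
              _ = 2 := by norm_num
    have hdiff : (inner ℝ (hstar'' a v) v : ℝ) - (inner ℝ (hstar'' b v) v : ℝ)
        ≤ M * (‖y - x‖ + 2 * ‖v‖) * ‖v‖ ^ 2 := by
      calc (inner ℝ (hstar'' a v) v : ℝ) - (inner ℝ (hstar'' b v) v : ℝ)
          = inner ℝ (hstar'' a v - hstar'' b v) v := by rw [inner_sub_left]
        _ ≤ ‖hstar'' a v - hstar'' b v‖ * ‖v‖ := real_inner_le_norm _ _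
        _ ≤ (M * ‖a - b‖ * ‖v‖) * ‖v‖ := by gcongr; exact hlip a b v
        _ ≤ (M * (‖y - x‖ + 2 * ‖v‖) * ‖v‖) * ‖v‖ := by gcongr
        _ = M * (‖y - x‖ + 2 * ‖v‖) * ‖v‖ ^ 2 := by ring
    have hl2nn : (0 : ℝ) ≤ l ^ 2 := sq_nonneg l
    simp only [hφ2, hC, hwv]
    nlinarith [mul_le_mul_of_nonneg_left hdiff hl2nn]
  have hcont1 : ContinuousOn φ1 (Set.Icc (0 : ℝ) 1) :=
    (continuous_iff_continuousAt.mpr fun t => (hφ1d t).continuousAt).continuousOn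
  have hm1 : MonotoneOn φ1 (Set.Icc (0 : ℝ) 1) := by
    apply monotoneOn_of_hasDerivWithinAt_nonneg (convex_Icc 0 1) hcont1
      (f' := φ2) (fun t ht => (hφ1d t).hasDerivWithinAt)
    intro t ht
    rw [interior_Icc] at ht
    exact hφ2nn t (Ioo_subset_Icc_self ht)
  have hφ10 : φ1 0 = 0 := by simp [hφ1]
  have hφ1nn : ∀ t ∈ interior (Set.Icc (0 : ℝ) 1), 0 ≤ φ1 t := by
    intro t ht
    rw [interior_Icc] at ht
    have := hm1 (Set.left_mem_Icc.mpr zero_le_one) (Ioo_subset_Icc_self ht) ht.1.le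
    linarith [hφ10 ▸ this]
  have hcont : ContinuousOn φ (Set.Icc (0 : ℝ) 1) :=
    (continuous_iff_continuousAt.mpr fun t => (hφd t).continuousAt).continuousOn
  have hm : MonotoneOn φ (Set.Icc (0 : ℝ) 1) :=
    monotoneOn_of_hasDerivWithinAt_nonneg (convex_Icc 0 1) hcont
      (fun t ht => (hφd t).hasDerivWithinAt) hφ1nn
  have hφ0 : φ 0 = 0 := by simp [hφ, hG, hg]
  have h01 : φ 0 ≤ φ 1 :=
    hm (Set.left_mem_Icc.mpr zero_le_one) (Set.right_mem_Icc.mpr zero_le_one) zero_le_one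
  have hg1 : g 1 = breg hstar hstar' (x + w) x := by
    simp [hg, breg, add_sub_cancel_left]
  have hG1 : G 1 = D := by
    simp [hG, hD, breg, add_sub_cancel_left]
  rw [hφ0] at h01
  simp only [hφ, hg1, hG1, one_pow, mul_one] at h01
  -- h01 : 0 ≤ l^2 * D + C / 2 - breg (x+w) x
  have hyx : (0:ℝ) ≤ ‖y - x‖ := norm_nonneg _
  have hvn : (0:ℝ) ≤ ‖v‖ := norm_nonneg _
  have hl2nn : (0 : ℝ) ≤ l ^ 2 := sq_nonneg l
  have hkey : C / 2 ≤ l ^ 2 * (M * (‖y - x‖ + 2 * ‖v‖) * (Lh * D)) := by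
    rw [hC]
    have h1 : M * (‖y - x‖ + 2 * ‖v‖) * ‖v‖ ^ 2 ≤ M * (‖y - x‖ + 2 * ‖v‖) * (2 * Lh * D) :=
      mul_le_mul_of_nonneg_left hv2 (by positivity)
    have h2 := mul_le_mul_of_nonneg_left h1 hl2nn
    have h3 : l ^ 2 * (M * (‖y - x‖ + 2 * ‖v‖) * (2 * Lh * D)) / 2
        = l ^ 2 * (M * (‖y - x‖ + 2 * ‖v‖) * (Lh * D)) := by ring
    linarith
  have hint1 : (0:ℝ) ≤ l ^ 2 * M * Lh * ‖y - x‖ * D :=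
    mul_nonneg (mul_nonneg (mul_nonneg (mul_nonneg hl2nn hM) hLh.le) hyx) hDnn
  have hfin : l ^ 2 * (1 + 2 * M * Lh * (‖y - x‖ + ‖v‖)) * D
      - (l ^ 2 * D + l ^ 2 * (M * (‖y - x‖ + 2 * ‖v‖) * (Lh * D)))
      = l ^ 2 * M * Lh * ‖y - x‖ * D := by ring
  linarith
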